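/- Let n ≥ 1 and L ∈ ℕ, and let Q assign to each word z ∈ {0,1}^n a finite set Q(z) of binary words with |Q(z)| ≤ L. If for every odd z ∈ {0,1}^n and every even z' ∈ {0,1}^n it holds that z ∈ Q(z') or z' ∈ Q(z), then 2^{2n−2} ≤ 2^n · L. (This is the counting core of the Hartmanis–Hemachandra argument used to derive the final contradiction in the oracle construction.) -/

import Mathlib

/-- The dyadic encoding: `val(w) = Σ_{i<|w|} (1 + w(i)) · 2^{|w|-1-i}`. -/
def dyadicVal (w : List Bool) : ℕ :=
  ∑ i ∈ Finset.range w.length,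
    (1 + (if w.getD i false then 1 else 0)) * 2 ^ (w.length - 1 - i)

lemma set_self' (w : List Bool) (k : ℕ) (hk : k < w.length) : w.set k (w.getD k false) = w := by
  apply List.ext_getElem (by simp)
  intro i h1 h2
  rw [List.getElem_set]
  split
  · subst i; rw [List.getD_eq_getElem _ _ hk]
  · rfl

lemma parity_lemma (w : List Bool) (h : 1 ≤ w.length) :
    Odd (dyadicVal w) ↔ w.getD (w.length - 1) false = false := by
  obtain ⟨m, hm⟩ : ∃ m, w.length = m + 1 := ⟨w.length - 1, (Nat.succ_pred_eq_of_pos h).symm⟩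
  rw [Nat.odd_iff, dyadicVal, Finset.sum_nat_mod, hm, Finset.sum_range_succ]
  have h1 : ∀ i ∈ Finset.range m,
      ((1 + (if w.getD i false then 1 else 0)) * 2 ^ (m + 1 - 1 - i)) % 2 = 0 := by
    intro i hi
    simp only [Finset.mem_range] at hi
    have : m + 1 - 1 - i = (m - 1 - i) + 1 := by omega
    rw [this, pow_succ, ← mul_assoc]
    exact Nat.mul_mod_left _ 2
  rw [Finset.sum_congr rfl h1, Finset.sum_const, smul_zero, zero_add]
  have : m + 1 - 1 - m = 0 := by omega
  rw [this]
  cases hb : w.getD m false <;> simp [hb] <;> simpa [List.getD] using hb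

lemma getD_set_self' (w : List Bool) (k : ℕ) (b : Bool) (hk : k < w.length) :
    (w.set k b).getD k false = b := by
  rw [List.getD_eq_getElem _ _ (by simpa using hk), List.getElem_set]
  simp

/-- The counting core of the Hartmanis–Hemachandra argument: if `Q` assigns to each
word of length `n ≥ 1` a finite set of at most `L` binary words, and for every odd
`z ∈ {0,1}^n` and every even `z' ∈ {0,1}^n` we have `z ∈ Q(z')` or `z' ∈ Q(z)`,
then `2^{2n-2} ≤ 2^n · L`. -/
theorem hartmanis_hemachandra_counting (n L : ℕ) (hn : 1 ≤ n)
    (Q : List Bool → Finset (List Bool))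
    (hL : ∀ z : List Bool, z.length = n → (Q z).card ≤ L)
    (hconf : ∀ z z' : List Bool, z.length = n → z'.length = n →
      Odd (dyadicVal z) → Even (dyadicVal z') → (z ∈ Q z' ∨ z' ∈ Q z)) :
    2 ^ (2 * n - 2) ≤ 2 ^ n * L := by
  classical
  set k := n - 1 with hk
  set F : Finset (List Bool) := (Finset.univ : Finset (Fin n → Bool)).image List.ofFn with hF
  have mem_F : ∀ x : List Bool, x ∈ F ↔ x.length = n := by
    intro x
    constructor
    · intro hx
      simp only [hF, Finset.mem_image] at hx
      obtain ⟨v, _, rfl⟩ := hx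
      simp
    · intro hx
      subst hx
      simp only [hF, Finset.mem_image]
      exact ⟨fun i => x[(i : ℕ)], Finset.mem_univ _, List.ofFn_getElem⟩
  have cardF : F.card = 2 ^ n := by
    rw [hF, Finset.card_image_of_injective _ List.ofFn_injective, Finset.card_univ]
    simp
  set A : Finset (List Bool) := F.filter (fun w => Odd (dyadicVal w)) with hA
  set B : Finset (List Bool) := F.filter (fun w => ¬ Odd (dyadicVal w)) with hB
  have lenA : ∀ w ∈ A, w.length = n := fun w hw => (mem_F w).1 (Finset.mem_filter.1 hw).1
  have lenB : ∀ w ∈ B, w.length = n := fun w hw => (mem_F w).1 (Finset.mem_filter.1 hw).1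
  have hkn : ∀ w : List Bool, w.length = n → k < w.length := fun w hw => by omega
  have cardAB : A.card = B.card := by
    apply Finset.card_bij' (i := fun w _ => w.set k true) (j := fun w _ => w.set k false)
    · intro w hw
      have hlen : w.length = n := lenA w hw
      have hodd : Odd (dyadicVal w) := (Finset.mem_filter.1 hw).2
      have hlast : w.getD k false = false := by
        have := (parity_lemma w (by omega)).1 hodd
        rwa [hlen, ← hk] at this
      rw [List.set_set, ← hlast, set_self' w k (hkn w hlen)]
    · intro w hw
      have hlen : w.length = n := lenB w hw
      have heven : ¬ Odd (dyadicVal w) := (Finset.mem_filter.1 hw).2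
      have hlast : w.getD k false = true := by
        by_contra hc
        exact heven ((parity_lemma w (by omega)).2 (by
          rw [hlen, ← hk]; simpa using hc))
      rw [List.set_set, ← hlast, set_self' w k (hkn w hlen)]

    · intro w hw
      have hlen : w.length = n := lenA w hw
      rw [hB, Finset.mem_filter]
      constructor
      · rw [mem_F]; simpa using hlen
      · rw [parity_lemma _ (by simp; omega)]
        simp only [List.length_set]
        rw [hlen, ← hk, getD_set_self' _ _ _ (hkn w hlen)]
        simp
    · intro w hw
      have hlen : w.length = n := lenB w hw
      rw [hA, Finset.mem_filter]
      constructor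
      · rw [mem_F]; simpa using hlen
      · rw [parity_lemma _ (by simp; omega)]
        simp only [List.length_set]
        rw [hlen, ← hk, getD_set_self' _ _ _ (hkn w hlen)]
  have cardA : A.card = 2 ^ k := by
    have hsum : A.card + B.card = F.card := Finset.card_filter_add_card_filter_not _
    rw [cardF, ← cardAB] at hsum
    have : n = k + 1 := by omega
    rw [this, pow_succ] at hsum
    omega
  -- the set of pairs
  set P : Finset (List Bool × List Bool) := A ×ˢ B with hP
  set T : Finset (List Bool × List Bool) :=
    F.biUnion (fun w => (Q w).image (fun q => (w, q))) with hT
  have cardP : P.card = 2 ^ (2 * n - 2) := by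
    rw [hP, Finset.card_product, cardA, ← cardAB, cardA, ← pow_add]
    congr 1
    omega
  have cardT : T.card ≤ 2 ^ n * L := by
    calc T.card ≤ ∑ w ∈ F, ((Q w).image (fun q => (w, q))).card := Finset.card_biUnion_le
      _ ≤ ∑ w ∈ F, L := by
          apply Finset.sum_le_sum
          intro w hw
          exact le_trans (Finset.card_image_le) (hL w ((mem_F w).1 hw))
      _ = 2 ^ n * L := by rw [Finset.sum_const, smul_eq_mul, cardF]
  have hinj : P.card ≤ T.card := by
    apply Finset.card_le_card_of_injOn
      (fun p => if p.1 ∈ Q p.2 then (p.2, p.1) else (p.1, p.2))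
    · intro p hp
      rw [hP, Finset.mem_coe, Finset.mem_product] at hp
      obtain ⟨hp1, hp2⟩ := hp
      have h1 : p.1.length = n := lenA _ hp1
      have h2 : p.2.length = n := lenB _ hp2
      have ho : Odd (dyadicVal p.1) := (Finset.mem_filter.1 hp1).2
      have he : Even (dyadicVal p.2) :=
        Nat.not_odd_iff_even.1 (Finset.mem_filter.1 hp2).2
      by_cases hq : p.1 ∈ Q p.2
      · simp only [hq, if_true, hT, Finset.mem_coe, Finset.mem_biUnion]
        exact ⟨p.2, (mem_F _).2 h2, Finset.mem_image.2 ⟨p.1, hq, rfl⟩⟩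
      · have hq' : p.2 ∈ Q p.1 := (hconf p.1 p.2 h1 h2 ho he).resolve_left hq
        simp only [hq, if_false, hT, Finset.mem_coe, Finset.mem_biUnion]
        exact ⟨p.1, (mem_F _).2 h1, Finset.mem_image.2 ⟨p.2, hq', rfl⟩⟩
    · intro p hp q hq heq
      simp only [hP, Finset.coe_product, Set.mem_prod, Finset.mem_coe] at hp hq
      have hop : Odd (dyadicVal p.1) := (Finset.mem_filter.1 hp.1).2
      have hep : ¬ Odd (dyadicVal p.2) := (Finset.mem_filter.1 hp.2).2
      have hoq : Odd (dyadicVal q.1) := (Finset.mem_filter.1 hq.1).2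
      have heq' : ¬ Odd (dyadicVal q.2) := (Finset.mem_filter.1 hq.2).2
      simp only [] at heq
      split_ifs at heq with h1 h2 h2 <;>
        rw [Prod.mk.injEq] at heq
      · exact Prod.ext heq.2 heq.1
      · exact absurd (heq.1 ▸ hoq) hep
      · exact absurd (heq.1 ▸ hop) heq'
      · exact Prod.ext heq.1 heq.2
  omega
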